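/- arXiv:2601.04616 — 2 statements merged into one kernel-verified Lean document; each statement's English description precedes it below -/
import Mathlib

section
/- Let ι be a finite index type with decidable equality and E a real vector space. Let u : (ι → E) → (ι → ℝ) be permutation equivariant. For x : ι → E, j : ι, and a finite set T ⊆ ι with j ∉ T, define v(x, T, j) = Σ_{R ⊆ T} (-1)^(|T| - |R|) · u(mask(x, R ∪ {j}))(j). Then v is permutation equivariant: for every permutation π of ι, every x, every finite T with j ∉ T, one has v(x ∘ π, T, j) = v(x, π(T), π(j)), where π(T) is the image of T under π. -/
/-- The masked feature map: `mask x A i = x i` if `i ∈ A`, and `0` otherwise. -/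
def mask {ι E : Type*} [DecidableEq ι] [Zero E] (x : ι → E) (A : Finset ι) : ι → E :=
  fun i => if i ∈ A then x i else 0

/-- Permutation equivariance of a utility function `u : (ι → E) → (ι → ℝ)`. -/
def PermEquivariant {ι E : Type*} (u : (ι → E) → ι → ℝ) : Prop :=
  ∀ (π : Equiv.Perm ι) (x : ι → E) (j : ι), u (x ∘ π) j = u x (π j)

/-- The context-effect coefficient
`v(x, T, j) = ∑_{R ⊆ T} (-1)^(|T|-|R|) · u(mask(x, R ∪ {j}))(j)`. -/
noncomputable def vCoef {ι E : Type*} [DecidableEq ι] [Zero E]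
    (u : (ι → E) → ι → ℝ) (x : ι → E) (T : Finset ι) (j : ι) : ℝ :=
  ∑ R ∈ T.powerset, (-1 : ℝ) ^ (T.card - R.card) * u (mask x (insert j R)) j

/-- if `u` is permutation equivariant, so is `v`:
`v(x ∘ π, T, j) = v(x, π(T), π(j))` whenever `j ∉ T`. -/
theorem vCoef_permEquivariant {ι : Type*} [Fintype ι] [DecidableEq ι]
    {E : Type*} [AddCommGroup E] [Module ℝ E]
    (u : (ι → E) → ι → ℝ) (hu : PermEquivariant u)
    (π : Equiv.Perm ι) (x : ι → E) (T : Finset ι) (j : ι) (hj : j ∉ T) :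
    vCoef u (x ∘ π) T j = vCoef u x (T.image π) (π j) := by
  have hmask : ∀ A : Finset ι, mask (x ∘ π) A = (mask x (A.image π)) ∘ π := by
    intro A
    funext i
    simp only [mask, Function.comp_apply, Finset.mem_image]
    congr 1
    simp [π.injective.eq_iff]
  unfold vCoef
  rw [Finset.sum_bij' (fun R _ => R.image π) (fun S _ => S.image π.symm)]
  · intro R hR
    simp only [Finset.mem_powerset] at hR ⊢
    exact Finset.image_subset_image hR
  · intro S hS
    simp only [Finset.mem_powerset] at hS ⊢
    intro a ha
    simp only [Finset.mem_image] at ha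
    obtain ⟨b, hb, rfl⟩ := ha
    obtain ⟨c, hc, rfl⟩ := Finset.mem_image.mp (hS hb)
    simpa using hc
  · intro R _
    rw [Finset.image_image]
    simp
  · intro S _
    rw [Finset.image_image]
    simp
  · intro R hR
    rw [Finset.card_image_of_injective _ π.injective,
      Finset.card_image_of_injective _ π.injective]
    congr 1
    rw [hmask, hu π]
    congr 2
    rw [Finset.image_insert]
end

section
/- Proposition 1: Let ι be a finite index type with decidable equality and E a real vector space. For every permutation-equivariant utility function u : (ι → E) → (ι → ℝ) there exists a function v assigning to each x : ι → E, each finite T ⊆ ι, and each j ∉ T a real number v(x, T, j), such that: (i) v(x, T, j) depends on x only through the masked features mask(x, T ∪ {j}), i.e. v(x, T, j) = v(mask(x, T ∪ {j}), T, j); (ii) v is permutation equivariant, i.e. v(x ∘ π, T, j) = v(x, π(T), π(j)) for every permutation π of ι; and (iii) for every finite S ⊆ ι with j ∈ S, u(mask(x, S))(j) = Σ_{T ⊆ S \ {j}} v(x, T, j). -/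
lemma mask_mask {ι E : Type*} [DecidableEq ι] [Zero E] (x : ι → E) {A B : Finset ι}
    (h : B ⊆ A) : mask (mask x A) B = mask x B := by
  funext i
  simp only [mask]
  by_cases hi : i ∈ B
  · simp [hi, h hi]
  · simp [hi]

lemma mask_comp {ι E : Type*} [DecidableEq ι] [Zero E] (x : ι → E) (π : Equiv.Perm ι)
    (A : Finset ι) : mask (x ∘ π) A = (mask x (A.image π)) ∘ π := by
  funext i
  simp only [mask, Function.comp_apply]
  have : π i ∈ A.image π ↔ i ∈ A := by
    constructor
    · intro h
      obtain ⟨y, hy, hyi⟩ := Finset.mem_image.1 h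
      rwa [← π.injective hyi]
    · intro h; exact Finset.mem_image_of_mem π h
  by_cases hi : i ∈ A <;> simp [hi, this]

lemma mobius {ι : Type*} [DecidableEq ι] (S : Finset ι) (f : Finset ι → ℝ) :
    ∑ T ∈ S.powerset, ∑ R ∈ T.powerset, (-1:ℝ)^(T.card - R.card) * f R = f S := by
  induction S using Finset.induction generalizing f with
  | empty => simp
  | @insert a S ha ih =>
    rw [Finset.powerset_insert, Finset.sum_union]
    · have himg : ∑ T ∈ S.powerset.image (insert a),
          ∑ R ∈ T.powerset, (-1:ℝ)^(T.card - R.card) * f R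
          = ∑ T ∈ S.powerset, ∑ R ∈ T.powerset,
              ((-1:ℝ)^(T.card + 1 - R.card) * f R + (-1:ℝ)^(T.card - R.card) * f (insert a R)) := by
        rw [Finset.sum_image (by
          intro x hx y hy hxy
          have hx' := Finset.mem_powerset.1 hx
          have hy' := Finset.mem_powerset.1 hy
          have : ∀ z ∈ S.powerset, insert a z \ {a} = z := by
            intro z hz
            rw [Finset.insert_sdiff_of_mem _ (Finset.mem_singleton_self a),
              Finset.sdiff_singleton_eq_erase, Finset.erase_eq_of_notMem
              (fun h => ha (Finset.mem_powerset.1 hz h))]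
          rw [← this x hx, ← this y hy, hxy])]
        refine Finset.sum_congr rfl fun T hT => ?_
        have haT : a ∉ T := fun h => ha (Finset.mem_powerset.1 hT h)
        rw [Finset.powerset_insert, Finset.sum_union, Finset.sum_image (by
          intro x hx y hy hxy
          have : ∀ z ∈ T.powerset, insert a z \ {a} = z := by
            intro z hz
            rw [Finset.insert_sdiff_of_mem _ (Finset.mem_singleton_self a),
              Finset.sdiff_singleton_eq_erase, Finset.erase_eq_of_notMem
              (fun h => haT (Finset.mem_powerset.1 hz h))]
          rw [← this x hx, ← this y hy, hxy]), ← Finset.sum_add_distrib]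
        · refine Finset.sum_congr rfl fun R hR => ?_
          have haR : a ∉ R := fun h => haT (Finset.mem_powerset.1 hR h)
          rw [Finset.card_insert_of_notMem haT, Finset.card_insert_of_notMem haR]
          have hRT : R.card ≤ T.card := Finset.card_le_card (Finset.mem_powerset.1 hR)
          have h2 : T.card + 1 - (R.card + 1) = T.card - R.card := by omega
          rw [h2]
        · rw [Finset.disjoint_left]
          intro x hx hx2
          obtain ⟨y, hy, rfl⟩ := Finset.mem_image.1 hx2
          exact haT (Finset.mem_powerset.1 hx (Finset.mem_insert_self a y))
      rw [himg]
      simp only [Finset.sum_add_distrib]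
      have h1 : ∑ T ∈ S.powerset, ∑ R ∈ T.powerset, (-1:ℝ)^(T.card + 1 - R.card) * f R
          = - ∑ T ∈ S.powerset, ∑ R ∈ T.powerset, (-1:ℝ)^(T.card - R.card) * f R := by
        rw [← Finset.sum_neg_distrib]
        refine Finset.sum_congr rfl fun T hT => ?_
        rw [← Finset.sum_neg_distrib]
        refine Finset.sum_congr rfl fun R hR => ?_
        have hRT : R.card ≤ T.card := Finset.card_le_card (Finset.mem_powerset.1 hR)
        have : T.card + 1 - R.card = (T.card - R.card) + 1 := by omega
        rw [this, pow_succ]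
        ring
      rw [h1, ih (fun R => f (insert a R))]
      ring
    · rw [Finset.disjoint_left]
      intro x hx hx2
      obtain ⟨y, hy, rfl⟩ := Finset.mem_image.1 hx2
      exact ha (Finset.mem_powerset.1 hx (Finset.mem_insert_self a y))

/-- Proposition 1: every permutation-equivariant utility function
`u : (ι → E) → (ι → ℝ)` admits context-effect coefficients `v` such that
(i) `v x T j` depends on `x` only through `mask x (T ∪ {j})`,
(ii) `v` is permutation equivariant, and
(iii) `u (mask x S) j = ∑_{T ⊆ S \ {j}} v x T j` whenever `j ∈ S`. -/
theorem exists_context_effect_decomposition {ι : Type*} [Fintype ι] [DecidableEq ι]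
    {E : Type*} [AddCommGroup E] [Module ℝ E]
    (u : (ι → E) → ι → ℝ) (hu : PermEquivariant u) :
    ∃ v : (ι → E) → Finset ι → ι → ℝ,
      (∀ (x : ι → E) (T : Finset ι) (j : ι), j ∉ T →
        v x T j = v (mask x (insert j T)) T j) ∧
      (∀ (π : Equiv.Perm ι) (x : ι → E) (T : Finset ι) (j : ι), j ∉ T →
        v (x ∘ π) T j = v x (T.image π) (π j)) ∧
      (∀ (x : ι → E) (S : Finset ι) (j : ι), j ∈ S →
        u (mask x S) j = ∑ T ∈ (S.erase j).powerset, v x T j) := by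
  refine ⟨fun x T j => ∑ R ∈ T.powerset, (-1:ℝ)^(T.card - R.card) * u (mask x (insert j R)) j,
    ?_, ?_, ?_⟩
  · intro x T j hj
    refine Finset.sum_congr rfl fun R hR => ?_
    rw [mask_mask x (Finset.insert_subset_insert j (Finset.mem_powerset.1 hR))]
  · intro π x T j hj
    dsimp only
    refine Finset.sum_nbij' (i := fun R => R.image π) (j := fun R => R.image π.symm) ?_ ?_ ?_ ?_ ?_
    · intro R hR
      exact Finset.mem_powerset.2 (Finset.image_subset_image (Finset.mem_powerset.1 hR))
    · intro R hR
      rw [Finset.mem_powerset] at hR ⊢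
      intro i hi
      obtain ⟨y, hy, rfl⟩ := Finset.mem_image.1 hi
      have := hR hy
      obtain ⟨z, hz, hzy⟩ := Finset.mem_image.1 this
      rw [← hzy]; simpa using hz
    · intro R _
      simp [Finset.image_image]
    · intro R _
      simp [Finset.image_image]
    · intro R hR
      rw [mask_comp, hu, Finset.image_insert,
        Finset.card_image_of_injective _ π.injective,
        Finset.card_image_of_injective _ π.injective]
  · intro x S j hj
    dsimp only
    rw [mobius (S.erase j) (fun R => u (mask x (insert j R)) j),
      Finset.insert_erase hj]
end
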